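/- Let ρ : G → GL(V) be a representation of a group G on a finite-dimensional complex vector space V, with m ∈ G such that ρ(m) is diagonalizable with eigenvalue μ₀ ≠ 1 of multiplicity 1 (eigenvector e₁) and eigenvalue 1 of multiplicity dim V − 1. Suppose V' ⊂ V is a proper nonzero invariant subspace not containing e₁. Then the quotient representation on V/V' again has the property that the image of m is diagonalizable with eigenvalue μ₀ of multiplicity 1 and eigenvalue 1 of multiplicity dim(V/V') − 1. -/

import Mathlib

open Module Submodule

/-- If `ρ(m)` is diagonalizable with eigenvalue `μ₀ ≠ 1` of
multiplicity 1 (eigenvector `e₁`) and eigenvalue `1` of multiplicity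
`dim V − 1`, and `V'` is a proper nonzero invariant subspace not containing
`e₁`, then the induced map on `V ⧸ V'` is again diagonalizable with eigenvalue
`μ₀` of multiplicity 1 (eigenvector the image of `e₁`) and eigenvalue `1` of
multiplicity `dim (V ⧸ V') − 1`. -/
theorem stmt3 {G : Type*} [Group G] {V : Type*} [AddCommGroup V] [Module ℂ V]
    [FiniteDimensional ℂ V]
    (ρ : Representation ℂ G V) (m : G) (μ₀ : ℂ) (hμ₀ : μ₀ ≠ 1)
    (e₁ : V) (he₁ : e₁ ≠ 0)
    (heig : ρ m e₁ = μ₀ • e₁)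
    (hdiag : span ℂ {e₁} ⊔ Module.End.eigenspace (ρ m) 1 = ⊤)
    (hmult : finrank ℂ (Module.End.eigenspace (ρ m) 1) = finrank ℂ V - 1)
    (V' : Submodule ℂ V)
    (hinv : ∀ g : G, V' ≤ V'.comap (ρ g))
    (hV'bot : V' ≠ ⊥) (hV'top : V' ≠ ⊤) (he₁V' : e₁ ∉ V') :
    Submodule.Quotient.mk (p := V') e₁ ≠ 0 ∧
    (V'.mapQ V' (ρ m) (hinv m)) (Submodule.Quotient.mk e₁) =
      μ₀ • (Submodule.Quotient.mk (p := V') e₁) ∧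
    span ℂ {Submodule.Quotient.mk (p := V') e₁} ⊔
        Module.End.eigenspace (V'.mapQ V' (ρ m) (hinv m)) 1 = ⊤ ∧
    finrank ℂ (Module.End.eigenspace (V'.mapQ V' (ρ m) (hinv m)) 1) =
      finrank ℂ (V ⧸ V') - 1 := by
  set q := V'.mapQ V' (ρ m) (hinv m) with hq
  have h0 : Submodule.Quotient.mk (p := V') e₁ ≠ 0 := by
    simpa [Submodule.Quotient.mk_eq_zero] using he₁V'
  have h1 : q (Submodule.Quotient.mk e₁) = μ₀ • (Submodule.Quotient.mk (p := V') e₁) := by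
    rw [hq, Submodule.mapQ_apply, heig]
    simp
  -- eigenspace maps into eigenspace
  have hEmap : (Module.End.eigenspace (ρ m) 1).map V'.mkQ ≤
      Module.End.eigenspace q 1 := by
    intro x hx
    obtain ⟨v, hv, rfl⟩ := Submodule.mem_map.mp hx
    rw [Module.End.mem_eigenspace_iff] at hv ⊢
    rw [hq, Submodule.mkQ_apply, Submodule.mapQ_apply, hv]
    simp
  have hsup : span ℂ {Submodule.Quotient.mk (p := V') e₁} ⊔
      Module.End.eigenspace q 1 = ⊤ := by
    apply le_antisymm le_top
    have : (⊤ : Submodule ℂ (V ⧸ V')) = (⊤ : Submodule ℂ V).map V'.mkQ := by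
      rw [Submodule.map_top, Submodule.range_mkQ]
    rw [this, ← hdiag, Submodule.map_sup, Submodule.map_span]
    refine sup_le_sup ?_ hEmap
    simp [Submodule.span_le]
  refine ⟨h0, h1, hsup, ?_⟩
  -- eigenspace is not everything
  have hne : Module.End.eigenspace q 1 ≠ ⊤ := by
    intro h
    have : Submodule.Quotient.mk (p := V') e₁ ∈ Module.End.eigenspace q 1 := by
      rw [h]; trivial
    rw [Module.End.mem_eigenspace_iff, h1, one_smul] at this
    have : (μ₀ - 1) • (Submodule.Quotient.mk (p := V') e₁ : V ⧸ V') = 0 := by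
      rw [sub_smul, this, one_smul, sub_self]
    rcases smul_eq_zero.mp this with h' | h'
    · exact hμ₀ (by linear_combination h')
    · exact h0 h'
  have hlt : finrank ℂ (Module.End.eigenspace q 1) < finrank ℂ (V ⧸ V') :=
    Submodule.finrank_lt hne
  have htop : finrank ℂ ↥(span ℂ {Submodule.Quotient.mk (p := V') e₁} ⊔
      Module.End.eigenspace q 1) = finrank ℂ (V ⧸ V') := by
    rw [hsup]; exact finrank_top ℂ _
  have hadd := Submodule.finrank_sup_add_finrank_inf_eq
    (span ℂ {Submodule.Quotient.mk (p := V') e₁}) (Module.End.eigenspace q 1)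
  rw [finrank_span_singleton h0] at hadd
  omega
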